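/- Non-robustness of diagonal-gate entanglement: let ρ be a state on a tripartite system A⊗B⊗C (with B, C qubits) that is separable across the cut AB|C. Let U = |0⟩⟨0|⊗U₀ + |1⟩⟨1|⊗U₁ be a diagonal-block two-qubit gate acting on B⊗C. Then Tr_B[(I_A⊗U) ρ (I_A⊗U)†] is a separable state across the cut A|C. -/

import Mathlib

open Complex Matrix
open scoped ComplexOrder
noncomputable section

variable {α : Type} [Fintype α] [DecidableEq α]

/-- A density operator: positive semidefinite with unit trace. -/
def IsState {n : Type} [Fintype n] [DecidableEq n] (ρ : Matrix n n ℂ) : Prop :=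
  ρ.PosSemidef ∧ ρ.trace = 1

/-- Separability of a state on A⊗B⊗C across the cut AB|C. -/
def SepABC (ρ : Matrix (α × Fin 2 × Fin 2) (α × Fin 2 × Fin 2) ℂ) : Prop :=
  ∃ (k : ℕ) (p : Fin k → ℝ) (σ : Fin k → Matrix (α × Fin 2) (α × Fin 2) ℂ)
    (τ : Fin k → Matrix (Fin 2) (Fin 2) ℂ),
    (∀ i, 0 ≤ p i) ∧ (∀ i, IsState (σ i)) ∧ (∀ i, IsState (τ i)) ∧
    ∀ x x' b b' c c',
      ρ (x, b, c) (x', b', c') = ∑ i, (p i : ℂ) * σ i (x, b) (x', b') * τ i c c'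

/-- Separability of a state on A⊗C across the cut A|C. -/
def SepAC (ρ : Matrix (α × Fin 2) (α × Fin 2) ℂ) : Prop :=
  ∃ (k : ℕ) (p : Fin k → ℝ) (σ : Fin k → Matrix α α ℂ)
    (τ : Fin k → Matrix (Fin 2) (Fin 2) ℂ),
    (∀ i, 0 ≤ p i) ∧ (∀ i, IsState (σ i)) ∧ (∀ i, IsState (τ i)) ∧
    ∀ x x' c c', ρ (x, c) (x', c') = ∑ i, (p i : ℂ) * σ i x x' * τ i c c'

/-- Partial trace over the middle (B) system. -/
def ptraceB (ρ : Matrix (α × Fin 2 × Fin 2) (α × Fin 2 × Fin 2) ℂ) :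
    Matrix (α × Fin 2) (α × Fin 2) ℂ :=
  fun p q => ∑ b : Fin 2, ρ (p.1, b, p.2) (q.1, b, q.2)

/-- I_A ⊗ U where U = |0⟩⟨0|⊗U₀ + |1⟩⟨1|⊗U₁ is the block-diagonal two-qubit gate on B⊗C. -/
def IAU (U₀ U₁ : Matrix (Fin 2) (Fin 2) ℂ) :
    Matrix (α × Fin 2 × Fin 2) (α × Fin 2 × Fin 2) ℂ :=
  fun p q =>
    if p.1 = q.1 ∧ p.2.1 = q.2.1 then
      (if p.2.1 = 0 then U₀ else U₁) p.2.2 q.2.2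
    else 0

private lemma aux_diag_nonneg {n : Type} [Fintype n] [DecidableEq n] {A : Matrix n n ℂ}
    (hA : A.PosSemidef) (i : n) : 0 ≤ A i i := by
  have := hA.dotProduct_mulVec_nonneg (Pi.single i 1)
  simpa [dotProduct, Matrix.mulVec, Pi.single_apply, Finset.sum_ite_eq] using this

private lemma aux_trace_nonneg {n : Type} [Fintype n] [DecidableEq n] {A : Matrix n n ℂ}
    (hA : A.PosSemidef) : 0 ≤ A.trace := by
  rw [Matrix.trace]
  exact Finset.sum_nonneg fun i _ => aux_diag_nonneg hA i

private lemma aux_trace_coe {n : Type} [Fintype n] [DecidableEq n] {A : Matrix n n ℂ}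
    (hA : A.PosSemidef) : ((A.trace.re : ℝ) : ℂ) = A.trace := by
  have h := aux_trace_nonneg hA
  rw [Complex.le_def] at h
  exact Complex.ext rfl (by simp [← h.2])

private lemma aux_trace_re_nonneg {n : Type} [Fintype n] [DecidableEq n] {A : Matrix n n ℂ}
    (hA : A.PosSemidef) : 0 ≤ A.trace.re := by
  have h := aux_trace_nonneg hA
  rw [Complex.le_def] at h
  simpa using h.1

private lemma aux_psd_trace_zero {n : Type} [Fintype n] [DecidableEq n] {A : Matrix n n ℂ}
    (hA : A.PosSemidef) (h : A.trace = 0) : A = 0 := by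
  exact hA.trace_eq_zero_iff.mp h

private lemma aux_psd_smul {n : Type} [Fintype n] [DecidableEq n] {A : Matrix n n ℂ}
    (hA : A.PosSemidef) {r : ℝ} (hr : 0 ≤ r) : ((r : ℂ) • A).PosSemidef := by
  refine Matrix.posSemidef_iff_dotProduct_mulVec.mpr ⟨?_, ?_⟩
  · unfold Matrix.IsHermitian
    rw [Matrix.conjTranspose_smul, hA.1.eq]
    congr 1
    simp [Complex.star_def, Complex.conj_ofReal]
  · intro x
    rw [Matrix.smul_mulVec, dotProduct_smul, smul_eq_mul]
    exact mul_nonneg (by exact_mod_cast Complex.zero_le_real.mpr hr) (hA.dotProduct_mulVec_nonneg x)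

/-- Entanglement generated by a diagonal two-qubit gate is non-robust: if ρ is separable
across AB|C and we apply the block-diagonal gate on BC then trace out B, the result is
separable across A|C. -/
theorem diagonal_gate_entanglement_non_robust
    (ρ : Matrix (α × Fin 2 × Fin 2) (α × Fin 2 × Fin 2) ℂ)
    (hρ : IsState ρ) (hsep : SepABC ρ)
    (U₀ U₁ : Matrix (Fin 2) (Fin 2) ℂ)
    (hU₀ : U₀ᴴ * U₀ = 1) (hU₁ : U₁ᴴ * U₁ = 1) :
    SepAC (ptraceB (IAU U₀ U₁ * ρ * (IAU U₀ U₁ : Matrix _ _ ℂ)ᴴ)) := by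
  obtain ⟨k, p, σ, τ, hp, hσ, hτ, hrep⟩ := hsep
  have hne : Nonempty α := by
    by_contra h
    rw [not_nonempty_iff] at h
    have h1 := hρ.2
    rw [Matrix.trace] at h1
    simp at h1
  obtain ⟨a⟩ := hne
  set Ub : Fin 2 → Matrix (Fin 2) (Fin 2) ℂ := fun b => if b = 0 then U₀ else U₁ with hUbdef
  have hUb : ∀ b, (Ub b)ᴴ * (Ub b) = 1 := by
    intro b; fin_cases b <;> simp [hUbdef, hU₀, hU₁]
  set M : Fin k → Fin 2 → Matrix α α ℂ :=
    fun i b => (σ i).submatrix (fun x => (x, b)) (fun x => (x, b)) with hMdef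
  have hMpsd : ∀ i b, (M i b).PosSemidef := fun i b => (hσ i).1.submatrix _
  have hMapp : ∀ i b x x', M i b x x' = σ i (x, b) (x', b) := fun _ _ _ _ => rfl
  set t : Fin k → Fin 2 → ℝ := fun i b => ((M i b).trace).re with htdef
  have htcoe : ∀ i b, ((t i b : ℝ) : ℂ) = (M i b).trace := fun i b => aux_trace_coe (hMpsd i b)
  have htnn : ∀ i b, 0 ≤ t i b := fun i b => aux_trace_re_nonneg (hMpsd i b)
  set σ₀ : Matrix α α ℂ := Matrix.diagonal (fun x => if x = a then 1 else 0) with hσ₀def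
  have hσ₀ : IsState σ₀ := by
    constructor
    · refine Matrix.PosSemidef.diagonal fun x => ?_
      dsimp only
      split <;> simp
    · simp [hσ₀def, Matrix.trace_diagonal]
  set e : Fin k × Fin 2 ≃ Fin (k * 2) := finProdFinEquiv with hedef
  refine ⟨k * 2,
    fun j => p (e.symm j).1 * t (e.symm j).1 (e.symm j).2,
    fun j => if (M (e.symm j).1 (e.symm j).2).trace = 0 then σ₀
      else (((t (e.symm j).1 (e.symm j).2)⁻¹ : ℝ) : ℂ) • M (e.symm j).1 (e.symm j).2,
    fun j => Ub (e.symm j).2 * τ (e.symm j).1 * (Ub (e.symm j).2)ᴴ,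
    fun j => mul_nonneg (hp _) (htnn _ _), ?_, ?_, ?_⟩
  · -- σ' states
    intro j
    dsimp only
    by_cases h : (M (e.symm j).1 (e.symm j).2).trace = 0
    · rw [if_pos h]; exact hσ₀
    · rw [if_neg h]
      have htne : t (e.symm j).1 (e.symm j).2 ≠ 0 := fun h0 => h (by rw [← htcoe, h0]; simp)
      refine ⟨aux_psd_smul (hMpsd _ _) (inv_nonneg.mpr (htnn _ _)), ?_⟩
      rw [Matrix.trace_smul, smul_eq_mul, ← htcoe, ← Complex.ofReal_mul,
        inv_mul_cancel₀ htne, Complex.ofReal_one]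
  · -- τ' states
    intro j
    dsimp only
    refine ⟨(hτ _).1.mul_mul_conjTranspose_same _, ?_⟩
    rw [Matrix.trace_mul_cycle, hUb, Matrix.one_mul, (hτ _).2]
  · -- the representation
    intro x x' c c'
    have key : ∀ b : Fin 2,
        ((IAU U₀ U₁ * ρ * (IAU U₀ U₁)ᴴ :
            Matrix (α × Fin 2 × Fin 2) (α × Fin 2 × Fin 2) ℂ)) (x, b, c) (x', b, c') =
        ∑ d : Fin 2, ∑ d' : Fin 2,
          Ub b c d * ρ (x, b, d) (x', b, d') * (starRingEnd ℂ) (Ub b c' d') := by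
      intro b
      fin_cases b <;>
        simp [IAU, hUbdef, Matrix.mul_apply, Matrix.conjTranspose_apply, Fintype.sum_prod_type,
          ite_mul, mul_ite, mul_zero, zero_mul, Finset.sum_ite_eq, Finset.sum_ite_eq',
          apply_ite (starRingEnd ℂ), Finset.mul_sum, Finset.sum_mul, mul_assoc,
          Fin.sum_univ_two] <;> ring
    have step2 : ∀ b : Fin 2,
        (∑ d : Fin 2, ∑ d' : Fin 2,
          Ub b c d * ρ (x, b, d) (x', b, d') * (starRingEnd ℂ) (Ub b c' d')) =
        ∑ i, (p i : ℂ) * M i b x x' * ((Ub b * τ i * (Ub b)ᴴ) c c') := by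
      intro b
      simp only [hrep, hMapp, Fin.sum_univ_two, Finset.sum_mul, Finset.mul_sum,
        Matrix.mul_apply, Matrix.conjTranspose_apply, ← Finset.sum_add_distrib,
        RCLike.star_def]
      exact Finset.sum_congr rfl fun i _ => by ring
    have lhs : ptraceB (IAU U₀ U₁ * ρ * (IAU U₀ U₁ : Matrix _ _ ℂ)ᴴ) ((x, c)) ((x', c')) =
        ∑ b : Fin 2, ∑ i, (p i : ℂ) * M i b x x' * ((Ub b * τ i * (Ub b)ᴴ) c c') := by
      simp only [ptraceB]
      exact Finset.sum_congr rfl fun b _ => (key b).trans (step2 b)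
    have rhs : (∑ j : Fin (k * 2), ((p (e.symm j).1 * t (e.symm j).1 (e.symm j).2 : ℝ) : ℂ) *
          (if (M (e.symm j).1 (e.symm j).2).trace = 0 then σ₀
            else (((t (e.symm j).1 (e.symm j).2)⁻¹ : ℝ) : ℂ) • M (e.symm j).1 (e.symm j).2) x x' *
          (Ub (e.symm j).2 * τ (e.symm j).1 * (Ub (e.symm j).2)ᴴ) c c') =
        ∑ b : Fin 2, ∑ i : Fin k, ((p i * t i b : ℝ) : ℂ) *
          (if (M i b).trace = 0 then σ₀ else (((t i b)⁻¹ : ℝ) : ℂ) • M i b) x x' *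
          (Ub b * τ i * (Ub b)ᴴ) c c' := by
      rw [← Equiv.sum_comp e]
      simp only [Equiv.symm_apply_apply]
      rw [Fintype.sum_prod_type, Finset.sum_comm]
    rw [lhs, rhs]
    refine Finset.sum_congr rfl fun b _ => Finset.sum_congr rfl fun i _ => ?_
    by_cases h : (M i b).trace = 0
    · have hM0 : M i b = 0 := aux_psd_trace_zero (hMpsd i b) h
      have ht0 : t i b = 0 := by rw [htdef]; simp [← hMdef, h]
      simp [h, hM0, ht0]
    · have htne : t i b ≠ 0 := fun h0 => h (by rw [← htcoe i b, h0]; simp)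
      have htne' : ((t i b : ℝ) : ℂ) ≠ 0 := Complex.ofReal_ne_zero.mpr htne
      rw [if_neg h, Matrix.smul_apply, smul_eq_mul, Complex.ofReal_mul, Complex.ofReal_inv]
      field_simp
end
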